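/- arXiv:1711.05576 — 4 statements merged into one kernel-verified Lean document; each statement's English description precedes it below -/
import Mathlib

section
/- Fix an adiabatic constant γ > 1 and constants μ, η, κ, R > 0. Let (ρ, v, p, B, ψ) be a GLM-MHD state with ρ > 0 and p > 0, with entropy variables w (so w₅ = −2β < 0). Consider the map L : (ℝ⁹)³ → (ℝ⁹)³ sending a triple g = (g¹, g², g³) of putative spatial gradients (∂ₓw, ∂_yw, ∂_zw) of the entropy variables to the viscous flux (f₁ᵛ, f₂ᵛ, f₃ᵛ), where the primitive-variable gradients occurring in fᵛ are expressed through g via ∇v_k = −(1/w₅)∇w_{1+k} + (w_{1+k}/w₅²)∇w₅ for k = 1,2,3, ∇B_k = −(1/w₅)∇w_{5+k} + (w_{5+k}/w₅²)∇w₅ for k = 1,2,3, and ∇(p/ρ) = (1/w₅²)∇w₅. Then L is linear in g, and its representing block matrix K ∈ ℝ^{27×27} (acting on g viewed as a vector of ℝ²⁷) is symmetric and positive semi-definite: qᵀKq ≥ 0 for every q ∈ ℝ²⁷. -/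
set_option maxHeartbeats 4000000

open Matrix

/- ===== the fixed statement definitions ===== -/

/-- The entropy variables `w` of a GLM-MHD state `(ρ, v, p, B, ψ)`:
`w = ((γ−s)/(γ−1) − β‖v‖², 2βv, −2β, 2βB, 2βψ)` with `β = ρ/(2p)` and
`s = log (p ρ^(−γ))`. -/
noncomputable def entropyVars (γ ρ p ψ : ℝ) (v B : Fin 3 → ℝ) : Fin 9 → ℝ :=
  let β : ℝ := ρ / (2 * p)
  let s : ℝ := Real.log (p * ρ ^ (-γ))
  ![(γ - s) / (γ - 1) - β * ∑ k, (v k) ^ 2,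
    2 * β * v 0, 2 * β * v 1, 2 * β * v 2,
    -(2 * β),
    2 * β * B 0, 2 * β * B 1, 2 * β * B 2,
    2 * β * ψ]

/-- The viscous flux `fᵛ = (f₁ᵛ, f₂ᵛ, f₃ᵛ)` of the resistive GLM-MHD equations,
expressed as a function of a putative triple `g = (∂ₓw, ∂_yw, ∂_zw)` of spatial
gradients of the entropy variables: the primitive-variable gradients are rewritten via
`∇v_k = −(1/w₅)∇w_{1+k} + (w_{1+k}/w₅²)∇w₅`,
`∇B_k = −(1/w₅)∇w_{5+k} + (w_{5+k}/w₅²)∇w₅` and `∇(p/ρ) = (1/w₅²)∇w₅`.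
Components: mass `0`; momentum the viscous stress tensor
`τ = μ(∇v + (∇v)ᵀ) − (2/3)μ(∇·v)I`; energy `τv + (κ/R)∇(p/ρ) − η((∇×B)×B)`;
magnetic field `η((∇B)ᵀ − ∇B)`; GLM component `0`. -/
noncomputable def viscFluxOfGrad (γ μ η κ R ρ p ψ : ℝ) (v B : Fin 3 → ℝ)
    (g : Fin 3 → Fin 9 → ℝ) : Fin 3 → Fin 9 → ℝ :=
  let w := entropyVars γ ρ p ψ v B
  let gv : Fin 3 → Fin 3 → ℝ := fun k d =>
    -(1 / w 4) * (![g d 1, g d 2, g d 3] k) + ((![w 1, w 2, w 3] k) / (w 4) ^ 2) * g d 4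
  let gB : Fin 3 → Fin 3 → ℝ := fun k d =>
    -(1 / w 4) * (![g d 5, g d 6, g d 7] k) + ((![w 5, w 6, w 7] k) / (w 4) ^ 2) * g d 4
  let gT : Fin 3 → ℝ := fun d => (1 / (w 4) ^ 2) * g d 4
  let τ : Fin 3 → Fin 3 → ℝ := fun i j =>
    μ * (gv i j + gv j i) - (2 / 3) * μ * (∑ k, gv k k) * (if i = j then (1 : ℝ) else 0)
  fun d =>
    ![0,
      τ 0 d, τ 1 d, τ 2 d,
      (∑ i, τ i d * v i) + (κ / R) * gT d + η * ∑ k, B k * (gB k d - gB d k),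
      η * (gB 0 d - gB d 0), η * (gB 1 d - gB d 1), η * (gB 2 d - gB d 2),
      0]

/- ===== auxiliary lemmas and definitions ===== -/

theorem sum9' {M : Type*} [AddCommMonoid M] (f : Fin 9 → M) :
    ∑ i, f i = f 0 + f 1 + f 2 + f 3 + f 4 + f 5 + f 6 + f 7 + f 8 := by
  rw [Fin.sum_univ_succ, Fin.sum_univ_eight]
  norm_num [Fin.succ]
  simp only [← add_assoc]
  rfl

section
variable {α : Type*}
@[simp] lemma vec9_5 (a0 a1 a2 a3 a4 a5 a6 a7 a8 : α) :
    (![a0,a1,a2,a3,a4,a5,a6,a7,a8] : Fin 9 → α) 5 = a5 := rfl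
@[simp] lemma vec9_6 (a0 a1 a2 a3 a4 a5 a6 a7 a8 : α) :
    (![a0,a1,a2,a3,a4,a5,a6,a7,a8] : Fin 9 → α) 6 = a6 := rfl
@[simp] lemma vec9_7 (a0 a1 a2 a3 a4 a5 a6 a7 a8 : α) :
    (![a0,a1,a2,a3,a4,a5,a6,a7,a8] : Fin 9 → α) 7 = a7 := rfl
@[simp] lemma vec9_8 (a0 a1 a2 a3 a4 a5 a6 a7 a8 : α) :
    (![a0,a1,a2,a3,a4,a5,a6,a7,a8] : Fin 9 → α) 8 = a8 := rfl
end

/-- The common skeleton of the viscous flux, as a function of the primitive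
variable gradients `gv = ∇v`, `gB = ∇B` and `gT = ∇(p/ρ)`. -/
noncomputable def fluxSkel (μ η κR : ℝ) (v B : Fin 3 → ℝ) (gv gB : Fin 3 → Fin 3 → ℝ)
    (gT : Fin 3 → ℝ) : Fin 3 → Fin 9 → ℝ :=
  let τ : Fin 3 → Fin 3 → ℝ := fun i j =>
    μ * (gv i j + gv j i) - (2 / 3) * μ * (∑ k, gv k k) * (if i = j then (1 : ℝ) else 0)
  fun d =>
    ![0,
      τ 0 d, τ 1 d, τ 2 d,
      (∑ i, τ i d * v i) + κR * gT d + η * ∑ k, B k * (gB k d - gB d k),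
      η * (gB 0 d - gB d 0), η * (gB 1 d - gB d 1), η * (gB 2 d - gB d 2),
      0]

/-- Division-free form of the viscous flux, with `c = p/ρ = -1/w₅`. -/
noncomputable def fluxC (μ η κR c : ℝ) (v B : Fin 3 → ℝ)
    (g : Fin 3 → Fin 9 → ℝ) : Fin 3 → Fin 9 → ℝ :=
  fluxSkel μ η κR v B
    (fun k d => c * (![g d 1, g d 2, g d 3] k + v k * g d 4))
    (fun k d => c * (![g d 5, g d 6, g d 7] k + B k * g d 4))
    (fun d => c ^ 2 * g d 4)

/- ===== additivity / homogeneity of the skeleton ===== -/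

theorem fluxSkel_add (μ η κR : ℝ) (v B : Fin 3 → ℝ) (gv₁ gv₂ gB₁ gB₂ : Fin 3 → Fin 3 → ℝ)
    (gT₁ gT₂ : Fin 3 → ℝ) :
    fluxSkel μ η κR v B (gv₁ + gv₂) (gB₁ + gB₂) (gT₁ + gT₂)
      = fluxSkel μ η κR v B gv₁ gB₁ gT₁ + fluxSkel μ η κR v B gv₂ gB₂ gT₂ := by
  funext d a
  fin_cases d <;> fin_cases a <;>
    simp [fluxSkel, Fin.sum_univ_three] <;> ring

theorem fluxSkel_smul (μ η κR : ℝ) (v B : Fin 3 → ℝ) (t : ℝ) (gv gB : Fin 3 → Fin 3 → ℝ)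
    (gT : Fin 3 → ℝ) :
    fluxSkel μ η κR v B (t • gv) (t • gB) (t • gT)
      = t • fluxSkel μ η κR v B gv gB gT := by
  funext d a
  fin_cases d <;> fin_cases a <;>
    simp [fluxSkel, Fin.sum_univ_three, smul_eq_mul] <;> ring

theorem fluxC_add (μ η κR c : ℝ) (v B : Fin 3 → ℝ) (g h : Fin 3 → Fin 9 → ℝ) :
    fluxC μ η κR c v B (g + h) = fluxC μ η κR c v B g + fluxC μ η κR c v B h := by
  have hv : (fun k d => c * (![ (g + h) d 1, (g + h) d 2, (g + h) d 3] k + v k * (g + h) d 4))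
      = (fun k d => c * (![g d 1, g d 2, g d 3] k + v k * g d 4))
        + (fun k d => c * (![h d 1, h d 2, h d 3] k + v k * h d 4)) := by
    funext k d; fin_cases k <;> simp <;> ring
  have hB2 : (fun k d => c * (![ (g + h) d 5, (g + h) d 6, (g + h) d 7] k + B k * (g + h) d 4))
      = (fun k d => c * (![g d 5, g d 6, g d 7] k + B k * g d 4))
        + (fun k d => c * (![h d 5, h d 6, h d 7] k + B k * h d 4)) := by
    funext k d; fin_cases k <;> simp <;> ring
  have hT : (fun d => c ^ 2 * (g + h) d 4)
      = (fun d => c ^ 2 * g d 4) + (fun d => c ^ 2 * h d 4) := by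
    funext d; simp; ring
  simp only [fluxC]
  rw [hv, hB2, hT, fluxSkel_add]

theorem fluxC_smul (μ η κR c : ℝ) (v B : Fin 3 → ℝ) (t : ℝ) (g : Fin 3 → Fin 9 → ℝ) :
    fluxC μ η κR c v B (t • g) = t • fluxC μ η κR c v B g := by
  have hv : (fun k d => c * (![ (t • g) d 1, (t • g) d 2, (t • g) d 3] k + v k * (t • g) d 4))
      = t • (fun k d => c * (![g d 1, g d 2, g d 3] k + v k * g d 4)) := by
    funext k d; fin_cases k <;> simp [smul_eq_mul] <;> ring
  have hB2 : (fun k d => c * (![ (t • g) d 5, (t • g) d 6, (t • g) d 7] k + B k * (t • g) d 4))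
      = t • (fun k d => c * (![g d 5, g d 6, g d 7] k + B k * g d 4)) := by
    funext k d; fin_cases k <;> simp [smul_eq_mul] <;> ring
  have hT : (fun d => c ^ 2 * (t • g) d 4) = t • (fun d => c ^ 2 * g d 4) := by
    funext d; simp [smul_eq_mul]; ring
  simp only [fluxC]
  rw [hv, hB2, hT, fluxSkel_smul]

/- ===== the flux equals its division-free form ===== -/

theorem flux_eq (γ μ η κ R ρ p ψ : ℝ) (v B : Fin 3 → ℝ) (hρ : ρ ≠ 0) (hp : p ≠ 0)
    (g : Fin 3 → Fin 9 → ℝ) :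
    viscFluxOfGrad γ μ η κ R ρ p ψ v B g = fluxC μ η (κ / R) (p / ρ) v B g := by
  have h : viscFluxOfGrad γ μ η κ R ρ p ψ v B g = fluxSkel μ η (κ / R) v B
      (fun k d => -(1 / entropyVars γ ρ p ψ v B 4) * (![g d 1, g d 2, g d 3] k) +
        ((![entropyVars γ ρ p ψ v B 1, entropyVars γ ρ p ψ v B 2, entropyVars γ ρ p ψ v B 3] k)
          / (entropyVars γ ρ p ψ v B 4) ^ 2) * g d 4)
      (fun k d => -(1 / entropyVars γ ρ p ψ v B 4) * (![g d 5, g d 6, g d 7] k) +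
        ((![entropyVars γ ρ p ψ v B 5, entropyVars γ ρ p ψ v B 6, entropyVars γ ρ p ψ v B 7] k)
          / (entropyVars γ ρ p ψ v B 4) ^ 2) * g d 4)
      (fun d => (1 / (entropyVars γ ρ p ψ v B 4) ^ 2) * g d 4) := rfl
  rw [h, fluxC]
  have hgv : (fun k d => -(1 / entropyVars γ ρ p ψ v B 4) * (![g d 1, g d 2, g d 3] k) +
        ((![entropyVars γ ρ p ψ v B 1, entropyVars γ ρ p ψ v B 2, entropyVars γ ρ p ψ v B 3] k)
          / (entropyVars γ ρ p ψ v B 4) ^ 2) * g d 4)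
      = fun k d => (p / ρ) * (![g d 1, g d 2, g d 3] k + v k * g d 4) := by
    funext k d
    fin_cases k <;> simp [entropyVars] <;> field_simp <;> ring
  have hgB : (fun k d => -(1 / entropyVars γ ρ p ψ v B 4) * (![g d 5, g d 6, g d 7] k) +
        ((![entropyVars γ ρ p ψ v B 5, entropyVars γ ρ p ψ v B 6, entropyVars γ ρ p ψ v B 7] k)
          / (entropyVars γ ρ p ψ v B 4) ^ 2) * g d 4)
      = fun k d => (p / ρ) * (![g d 5, g d 6, g d 7] k + B k * g d 4) := by
    funext k d
    fin_cases k <;> simp [entropyVars] <;> field_simp <;> ring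
  have h4 : (1 / (entropyVars γ ρ p ψ v B 4) ^ 2) = (p / ρ) ^ 2 := by
    simp [entropyVars]
    field_simp
  have hgT : (fun d => (1 / (entropyVars γ ρ p ψ v B 4) ^ 2) * g d 4)
      = fun d => (p / ρ) ^ 2 * g d 4 := by
    funext d
    rw [h4]
  rw [hgv, hgB, hgT]

/- ===== symmetry of the associated bilinear form ===== -/

theorem fluxC_symmBilin (μ η κR c : ℝ) (v B : Fin 3 → ℝ) (g h : Fin 3 → Fin 9 → ℝ) :
    ∑ d : Fin 3, ∑ a : Fin 9, g d a * fluxC μ η κR c v B h d a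
      = ∑ d : Fin 3, ∑ a : Fin 9, h d a * fluxC μ η κR c v B g d a := by
  simp only [sum9', fluxC, fluxSkel, Fin.sum_univ_three, Matrix.cons_val_zero,
    Matrix.cons_val_one, Matrix.head_cons, Matrix.cons_val_two, Matrix.tail_cons,
    Matrix.cons_val_three, Matrix.cons_val_four,
    vec9_5, vec9_6, vec9_7, vec9_8, Fin.reduceEq, reduceIte, if_true, if_false]
  ring

/- ===== positivity of the associated quadratic form ===== -/

theorem fluxC_psd (μ η κR c : ℝ) (hμ : 0 ≤ μ) (hη : 0 ≤ η) (hκR : 0 ≤ κR) (hc : 0 ≤ c)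
    (v B : Fin 3 → ℝ) (g : Fin 3 → Fin 9 → ℝ) :
    0 ≤ ∑ d : Fin 3, ∑ a : Fin 9, g d a * fluxC μ η κR c v B g d a := by
  have key : ∑ d : Fin 3, ∑ a : Fin 9, g d a * fluxC μ η κR c v B g d a
      = c * (μ / 2) * (∑ i : Fin 3, ∑ j : Fin 3,
          ((![g j 1, g j 2, g j 3] i + v i * g j 4) + (![g i 1, g i 2, g i 3] j + v j * g i 4)
            - (2/3) * ((g 0 1 + v 0 * g 0 4) + (g 1 2 + v 1 * g 1 4) + (g 2 3 + v 2 * g 2 4))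
              * (if i = j then (1:ℝ) else 0)) ^ 2)
        + c * (η / 2) * (∑ i : Fin 3, ∑ j : Fin 3,
          ((![g j 5, g j 6, g j 7] i + B i * g j 4) - (![g i 5, g i 6, g i 7] j + B j * g i 4)) ^ 2)
        + κR * c ^ 2 * (∑ d : Fin 3, (g d 4) ^ 2) := by
    simp only [sum9', fluxC, fluxSkel, Fin.sum_univ_three, Matrix.cons_val_zero,
      Matrix.cons_val_one, Matrix.head_cons, Matrix.cons_val_two, Matrix.tail_cons,
      Matrix.cons_val_three, Matrix.cons_val_four,
      vec9_5, vec9_6, vec9_7, vec9_8, Fin.reduceEq, reduceIte, if_true, if_false]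
    ring
  rw [key]
  have h1 : (0:ℝ) ≤ ∑ i : Fin 3, ∑ j : Fin 3,
      ((![g j 1, g j 2, g j 3] i + v i * g j 4) + (![g i 1, g i 2, g i 3] j + v j * g i 4)
        - (2/3) * ((g 0 1 + v 0 * g 0 4) + (g 1 2 + v 1 * g 1 4) + (g 2 3 + v 2 * g 2 4))
          * (if i = j then (1:ℝ) else 0)) ^ 2 :=
    Finset.sum_nonneg fun i _ => Finset.sum_nonneg fun j _ => sq_nonneg _
  have h2 : (0:ℝ) ≤ ∑ i : Fin 3, ∑ j : Fin 3,
      ((![g j 5, g j 6, g j 7] i + B i * g j 4) - (![g i 5, g i 6, g i 7] j + B j * g i 4)) ^ 2 :=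
    Finset.sum_nonneg fun i _ => Finset.sum_nonneg fun j _ => sq_nonneg _
  have h3 : (0:ℝ) ≤ ∑ d : Fin 3, (g d 4) ^ 2 :=
    Finset.sum_nonneg fun d _ => sq_nonneg _
  have hc2 : (0:ℝ) ≤ c ^ 2 := sq_nonneg _
  have t1 := mul_nonneg (mul_nonneg hc (by linarith : (0:ℝ) ≤ μ / 2)) h1
  have t2 := mul_nonneg (mul_nonneg hc (by linarith : (0:ℝ) ≤ η / 2)) h2
  have t3 := mul_nonneg (mul_nonneg hκR hc2) h3
  linarith

/- ===== main theorem ===== -/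

/-- **Lemma 2.1.**  For any admissible GLM-MHD state, the map sending a triple of
putative entropy-variable gradients to the viscous flux is linear, and any matrix
`K ∈ ℝ^{27×27}` representing it (acting on the gradients viewed as a vector of ℝ²⁷)
is symmetric and positive semi-definite. -/
theorem viscous_flux_matrix_symm_posSemidef
    (γ μ η κ R : ℝ) (hγ : 1 < γ) (hμ : 0 < μ) (hη : 0 < η) (hκ : 0 < κ) (hR : 0 < R)
    (ρ p ψ : ℝ) (v B : Fin 3 → ℝ) (hρ : 0 < ρ) (hp : 0 < p) :
    IsLinearMap ℝ (viscFluxOfGrad γ μ η κ R ρ p ψ v B) ∧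
    ∀ K : Matrix (Fin 3 × Fin 9) (Fin 3 × Fin 9) ℝ,
      (∀ (g : Fin 3 → Fin 9 → ℝ) (d : Fin 3) (a : Fin 9),
        viscFluxOfGrad γ μ η κ R ρ p ψ v B g d a
          = ∑ q : Fin 3 × Fin 9, K (d, a) q * g q.1 q.2) →
      Kᵀ = K ∧ ∀ q : (Fin 3 × Fin 9) → ℝ, 0 ≤ ∑ x, ∑ y, q x * K x y * q y := by
  have he : ∀ g, viscFluxOfGrad γ μ η κ R ρ p ψ v B g = fluxC μ η (κ / R) (p / ρ) v B g :=
    flux_eq γ μ η κ R ρ p ψ v B hρ.ne' hp.ne'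
  have pick : ∀ (F : Fin 3 → Fin 9 → ℝ) (x : Fin 3 × Fin 9),
      ∑ d : Fin 3, ∑ a : Fin 9, (if (d, a) = x then (1:ℝ) else 0) * F d a = F x.1 x.2 := by
    intro F x
    obtain ⟨x1, x2⟩ := x
    simp [Prod.ext_iff, ite_and, Finset.sum_ite_eq', mul_ite, ite_mul]
  constructor
  · refine ⟨fun g h => ?_, fun t g => ?_⟩
    · rw [he, he, he, fluxC_add]
    · rw [he, he, fluxC_smul]
  · intro K hK
    have hKdet : ∀ x y : Fin 3 × Fin 9,
        K x y = viscFluxOfGrad γ μ η κ R ρ p ψ v B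
          (fun d a => if (d, a) = y then 1 else 0) x.1 x.2 := by
      intro x y
      rw [hK]
      simp [Finset.sum_ite_eq', mul_ite, mul_one, mul_zero]
    constructor
    · ext x y
      rw [Matrix.transpose_apply, hKdet y x, hKdet x y, he, he]
      calc fluxC μ η (κ / R) (p / ρ) v B (fun d a => if (d, a) = x then 1 else 0) y.1 y.2
          = ∑ d : Fin 3, ∑ a : Fin 9, (if (d, a) = y then (1:ℝ) else 0)
              * fluxC μ η (κ / R) (p / ρ) v B (fun d a => if (d, a) = x then 1 else 0) d a :=
            (pick _ y).symm
        _ = ∑ d : Fin 3, ∑ a : Fin 9, (if (d, a) = x then (1:ℝ) else 0)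
              * fluxC μ η (κ / R) (p / ρ) v B (fun d a => if (d, a) = y then 1 else 0) d a :=
            fluxC_symmBilin μ η (κ / R) (p / ρ) v B _ _
        _ = fluxC μ η (κ / R) (p / ρ) v B (fun d a => if (d, a) = y then 1 else 0) x.1 x.2 :=
            pick _ x
    · intro q
      have hq : ∀ x : Fin 3 × Fin 9, ∑ y, q x * K x y * q y
          = q x * viscFluxOfGrad γ μ η κ R ρ p ψ v B (fun d a => q (d, a)) x.1 x.2 := by
        intro x
        rw [hK, Finset.mul_sum]
        exact Finset.sum_congr rfl fun y _ => by ring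
      calc ∑ x, ∑ y, q x * K x y * q y
          = ∑ x : Fin 3 × Fin 9, q x
              * viscFluxOfGrad γ μ η κ R ρ p ψ v B (fun d a => q (d, a)) x.1 x.2 :=
            Finset.sum_congr rfl fun x _ => hq x
        _ = ∑ d : Fin 3, ∑ a : Fin 9, q (d, a)
              * viscFluxOfGrad γ μ η κ R ρ p ψ v B (fun d a => q (d, a)) d a :=
            Fintype.sum_prod_type _
        _ = ∑ d : Fin 3, ∑ a : Fin 9, (fun d a => q (d, a)) d a
              * fluxC μ η (κ / R) (p / ρ) v B (fun d a => q (d, a)) d a := by rw [he]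
        _ ≥ 0 := fluxC_psd μ η (κ / R) (p / ρ) hμ.le hη.le
            (div_nonneg hκ.le hR.le) (div_nonneg hp.le hρ.le) v B _
end

section
/- (Entropy contribution of GLM volume terms, Lemma 4.1, abstract two-dimensional form.) Let 𝒮 be a set of states, n ≥ 1, W : 𝒮 → ℝⁿ, Ψ₁, Ψ₂ : 𝒮 → ℝ, and for d = 1, 2 let F_d : 𝒮 × 𝒮 → ℝⁿ be symmetric two-point fluxes (F_d(U, V) = F_d(V, U)) satisfying, for all U, V ∈ 𝒮, the entropy-conservation condition (W(U) − W(V))ᵀ F_d(U, V) = Ψ_d(U) − Ψ_d(V) and the diagonal contraction property W(U)ᵀ F_d(U, U) = Ψ_d(U). Then for any SBP operator (ω, D, Q) and any nodal states U_{ij} ∈ 𝒮 (0 ≤ i, j ≤ N), the contracted split-form volume term vanishes: Σ_{i,j=0}^{N} ω_i ω_j W(U_{ij})ᵀ [ 2 Σ_{m=0}^{N} D_{im} F₁(U_{ij}, U_{mj}) + 2 Σ_{m=0}^{N} D_{jm} F₂(U_{ij}, U_{im}) ] = 0. -/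
open Matrix

/-- Exchange the order of summation and pull the weight out. -/
lemma mul_sum_swap {ι κ : Type*} [Fintype ι] [Fintype κ]
    (c : ι → ℝ) (w : κ → ℝ) (g : ι → κ → ℝ) :
    (∑ m, c m * (∑ a, w a * g m a)) = ∑ a, w a * (∑ m, c m * g m a) := by
  simp only [Finset.mul_sum]
  rw [Finset.sum_comm]
  exact Finset.sum_congr rfl fun a _ => Finset.sum_congr rfl fun m _ => by ring

/-- Pull a constant factor out of a sum of products. -/
lemma pull_const {ι : Type*} [Fintype ι] (c : ℝ) (d f : ι → ℝ) :
    (∑ m, (c * d m) * f m) = c * ∑ m, d m * f m := by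
  rw [Finset.mul_sum]
  exact Finset.sum_congr rfl fun m _ => by ring

/-- Auxiliary SBP cancellation lemma: if `Q + Qᵀ` is diagonal with entries `B`,
rows of `Q` sum to zero, and `S` satisfies `S i m - S m i = Ψ i - Ψ m` and
`S i i = Ψ i`, then `∑ i, ∑ m, Q i m * S i m = 0`. -/
lemma sbp_cancel {ι : Type*} [Fintype ι] [DecidableEq ι]
    (Q : ι → ι → ℝ) (B : ι → ℝ) (S : ι → ι → ℝ) (Ψ : ι → ℝ)
    (hQ : ∀ i m, Q i m + Q m i = if i = m then B i else 0)
    (hrow : ∀ i, (∑ m, Q i m) = 0)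
    (hdiff : ∀ i m, S i m - S m i = Ψ i - Ψ m)
    (hdiag : ∀ i, S i i = Ψ i) :
    (∑ i, ∑ m, Q i m * S i m) = 0 := by
  have hcol : ∀ m, (∑ i, Q i m) = B m := by
    intro m
    have : (∑ i, Q i m) = ∑ i, ((if i = m then B i else 0) - Q m i) := by
      apply Finset.sum_congr rfl
      intro i _
      have := hQ i m
      linarith
    rw [this, Finset.sum_sub_distrib, Finset.sum_ite_eq' Finset.univ m B, hrow m]
    simp
  have h2 : (2 : ℝ) * (∑ i, ∑ m, Q i m * S i m)
      = (∑ i, ∑ m, Q i m * (Ψ i - Ψ m)) + (∑ i, ∑ m, Q i m * (S i m + S m i)) := by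
    rw [Finset.mul_sum, ← Finset.sum_add_distrib]
    apply Finset.sum_congr rfl
    intro i _
    rw [Finset.mul_sum, ← Finset.sum_add_distrib]
    apply Finset.sum_congr rfl
    intro m _
    have := hdiff i m
    linear_combination (Q i m) * this
  have hP1 : (∑ i, ∑ m, Q i m * (Ψ i - Ψ m)) = - ∑ m, B m * Ψ m := by
    have e1 : (∑ i, ∑ m, Q i m * Ψ i) = 0 := by
      apply Finset.sum_eq_zero
      intro i _
      rw [← Finset.sum_mul, hrow i, zero_mul]
    have e2 : (∑ i, ∑ m, Q i m * Ψ m) = ∑ m, B m * Ψ m := by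
      rw [Finset.sum_comm]
      apply Finset.sum_congr rfl
      intro m _
      rw [← Finset.sum_mul, hcol m]
    calc (∑ i, ∑ m, Q i m * (Ψ i - Ψ m))
        = (∑ i, ∑ m, (Q i m * Ψ i - Q i m * Ψ m)) := by
          apply Finset.sum_congr rfl; intro i _
          apply Finset.sum_congr rfl; intro m _; ring
      _ = (∑ i, ∑ m, Q i m * Ψ i) - (∑ i, ∑ m, Q i m * Ψ m) := by
          rw [← Finset.sum_sub_distrib]
          apply Finset.sum_congr rfl; intro i _
          rw [Finset.sum_sub_distrib]
      _ = - ∑ m, B m * Ψ m := by rw [e1, e2]; ring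
  have hP2 : (∑ i, ∑ m, Q i m * (S i m + S m i)) = ∑ m, B m * Ψ m := by
    have e3 : (∑ i, ∑ m, Q i m * S m i) = ∑ i, ∑ m, Q m i * S i m :=
      Finset.sum_comm
    calc (∑ i, ∑ m, Q i m * (S i m + S m i))
        = (∑ i, ∑ m, Q i m * S i m) + (∑ i, ∑ m, Q i m * S m i) := by
          rw [← Finset.sum_add_distrib]
          apply Finset.sum_congr rfl; intro i _
          rw [← Finset.sum_add_distrib]
          apply Finset.sum_congr rfl; intro m _; ring
      _ = ∑ i, ∑ m, (Q i m + Q m i) * S i m := by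
          rw [e3, ← Finset.sum_add_distrib]
          apply Finset.sum_congr rfl; intro i _
          rw [← Finset.sum_add_distrib]
          apply Finset.sum_congr rfl; intro m _; ring
      _ = ∑ i, ∑ m, (if i = m then B i else 0) * S i m := by
          apply Finset.sum_congr rfl; intro i _
          apply Finset.sum_congr rfl; intro m _
          rw [hQ i m]
      _ = ∑ i, B i * S i i := by
          apply Finset.sum_congr rfl; intro i _
          simp [ite_mul]
      _ = ∑ m, B m * Ψ m := by
          apply Finset.sum_congr rfl; intro i _
          rw [hdiag i]
  have : (2 : ℝ) * (∑ i, ∑ m, Q i m * S i m) = 0 := by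
    rw [h2, hP1, hP2]; ring
  linarith

/-- **Entropy contribution of GLM volume terms** (Lemma 4.1, abstract two-dimensional form).
Given symmetric two-point fluxes satisfying the entropy-conservation condition and the
diagonal contraction property, the contracted split-form volume term vanishes for any
SBP operator. -/
theorem glm_volume_terms_vanish
    {𝒮 : Type*} (n : ℕ) (hn : 1 ≤ n)
    (W : 𝒮 → Fin n → ℝ) (Ψ : Fin 2 → 𝒮 → ℝ)
    (F : Fin 2 → 𝒮 → 𝒮 → Fin n → ℝ)
    (hsym : ∀ (d : Fin 2) (U V : 𝒮), F d U V = F d V U)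
    (hec : ∀ (d : Fin 2) (U V : 𝒮),
      (∑ a, (W U a - W V a) * F d U V a) = Ψ d U - Ψ d V)
    (hdiag : ∀ (d : Fin 2) (U : 𝒮), (∑ a, W U a * F d U U a) = Ψ d U)
    (N : ℕ) (hN : 1 ≤ N)
    (ω : Fin (N+1) → ℝ) (hω : ∀ i, 0 < ω i)
    (D : Matrix (Fin (N+1)) (Fin (N+1)) ℝ)
    (hrows : ∀ i, (∑ m, D i m) = 0)
    (hSBP : Matrix.diagonal ω * D + (Matrix.diagonal ω * D)ᵀ
      = Matrix.diagonal (fun i => if i = 0 then (-1 : ℝ)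
          else if i = Fin.last N then 1 else 0))
    (U : Fin (N+1) → Fin (N+1) → 𝒮) :
    (∑ i, ∑ j, ω i * ω j * ∑ a, W (U i j) a *
      (2 * ∑ m, D i m * F 0 (U i j) (U m j) a
        + 2 * ∑ m, D j m * F 1 (U i j) (U i m) a)) = 0 := by
  set B : Fin (N+1) → ℝ := fun i => if i = 0 then (-1 : ℝ)
      else if i = Fin.last N then 1 else 0 with hB
  -- entrywise SBP property
  have hQ : ∀ i m, ω i * D i m + ω m * D m i = if i = m then B i else 0 := by
    intro i m
    have h := congrFun (congrFun hSBP i) m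
    simp only [Matrix.add_apply, Matrix.transpose_apply, Matrix.mul_apply,
      Matrix.diagonal_apply, ite_mul, zero_mul, Finset.sum_ite_eq] at h
    simpa using h
  have hrowQ : ∀ i, (∑ m, ω i * D i m) = 0 := by
    intro i
    rw [← Finset.mul_sum, hrows i, mul_zero]
  -- key cancellation for any line of states and any direction
  have key : ∀ (d : Fin 2) (V : Fin (N+1) → 𝒮),
      (∑ i, ∑ m, (ω i * D i m) * (∑ a, W (V i) a * F d (V i) (V m) a)) = 0 := by
    intro d V
    apply sbp_cancel (fun i m => ω i * D i m) B
      (fun i m => ∑ a, W (V i) a * F d (V i) (V m) a) (fun i => Ψ d (V i))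
      hQ hrowQ
    · intro i m
      have hsymF : F d (V m) (V i) = F d (V i) (V m) := hsym d (V m) (V i)
      rw [hsymF, ← Finset.sum_sub_distrib, ← hec d (V i) (V m)]
      apply Finset.sum_congr rfl
      intro a _
      ring
    · intro i
      exact hdiag d (V i)
  -- pointwise splitting of the summand
  have point : ∀ (i j : Fin (N+1)),
      ω i * ω j * ∑ a, W (U i j) a *
        (2 * ∑ m, D i m * F 0 (U i j) (U m j) a
          + 2 * ∑ m, D j m * F 1 (U i j) (U i m) a)
      = 2 * ω j * (∑ m, (ω i * D i m) * (∑ a, W (U i j) a * F 0 (U i j) (U m j) a))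
        + 2 * ω i * (∑ m, (ω j * D j m) * (∑ a, W (U i j) a * F 1 (U i j) (U i m) a)) := by
    intro i j
    rw [mul_sum_swap (fun m => ω i * D i m) (W (U i j))
        (fun m a => F 0 (U i j) (U m j) a),
      mul_sum_swap (fun m => ω j * D j m) (W (U i j))
        (fun m a => F 1 (U i j) (U i m) a)]
    simp only [pull_const]
    rw [Finset.mul_sum, Finset.mul_sum, Finset.mul_sum, ← Finset.sum_add_distrib]
    apply Finset.sum_congr rfl
    intro a _
    ring
  calc (∑ i, ∑ j, ω i * ω j * ∑ a, W (U i j) a *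
      (2 * ∑ m, D i m * F 0 (U i j) (U m j) a
        + 2 * ∑ m, D j m * F 1 (U i j) (U i m) a))
      = (∑ i, ∑ j,
          (2 * ω j * (∑ m, (ω i * D i m) * (∑ a, W (U i j) a * F 0 (U i j) (U m j) a))
          + 2 * ω i * (∑ m, (ω j * D j m) * (∑ a, W (U i j) a * F 1 (U i j) (U i m) a)))) := by
        exact Finset.sum_congr rfl fun i _ => Finset.sum_congr rfl fun j _ => point i j
    _ = (∑ i, ∑ j,
          2 * ω j * (∑ m, (ω i * D i m) * (∑ a, W (U i j) a * F 0 (U i j) (U m j) a)))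
        + (∑ i, ∑ j,
          2 * ω i * (∑ m, (ω j * D j m) * (∑ a, W (U i j) a * F 1 (U i j) (U i m) a))) := by
        rw [← Finset.sum_add_distrib]
        exact Finset.sum_congr rfl fun i _ => Finset.sum_add_distrib
    _ = 0 := by
        have T1 : (∑ i, ∑ j,
            2 * ω j * (∑ m, (ω i * D i m) * (∑ a, W (U i j) a * F 0 (U i j) (U m j) a))) = 0 := by
          rw [Finset.sum_comm]
          apply Finset.sum_eq_zero
          intro j _
          rw [← Finset.mul_sum, key 0 (fun i => U i j), mul_zero]
        have T2 : (∑ i, ∑ j,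
            2 * ω i * (∑ m, (ω j * D j m) * (∑ a, W (U i j) a * F 1 (U i j) (U i m) a))) = 0 := by
          apply Finset.sum_eq_zero
          intro i _
          rw [← Finset.mul_sum, key 1 (U i), mul_zero]
        rw [T1, T2, add_zero]
end

section
/- (Entropy contribution of total volume terms, Corollary 4.3, abstract two-dimensional form.) Let 𝒮 be a set of states, n ≥ 1, W : 𝒮 → ℝⁿ, and Φ, b₁, b₂, fS₁, fS₂, Ψ₁, Ψ₂ : 𝒮 → ℝ. For d = 1, 2 let F_d : 𝒮 × 𝒮 → ℝⁿ be symmetric two-point fluxes satisfying, for all U, V ∈ 𝒮: (W(U) − W(V))ᵀ F_d(U, V) = Ψ_d(U) − Ψ_d(V) − ½(b_d(U) + b_d(V))(Φ(U) − Φ(V)), and the diagonal contraction property W(U)ᵀ F_d(U, U) = Ψ_d(U) + fS_d(U) − Φ(U) b_d(U). Then for any SBP operator (ω, D, Q) and any nodal states U_{ij} ∈ 𝒮 (0 ≤ i, j ≤ N): Σ_{i,j} ω_i ω_j W(U_{ij})ᵀ [ 2 Σ_m D_{im} F₁(U_{ij}, U_{mj}) + 2 Σ_m D_{jm} F₂(U_{ij},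 U_{im}) ] + Σ_{i,j} ω_i ω_j Φ(U_{ij}) [ Σ_m D_{im} b₁(U_{mj}) + Σ_m D_{jm} b₂(U_{im}) ] = Σ_{j=0}^{N} ω_j ( fS₁(U_{Nj}) − fS₁(U_{0j}) ) + Σ_{i=0}^{N} ω_i ( fS₂(U_{iN}) − fS₂(U_{i0}) ). -/
open Matrix

section helpers
variable {N : ℕ}

private def bc (N : ℕ) (i : Fin (N+1)) : ℝ :=
  if i = 0 then (-1 : ℝ) else if i = Fin.last N then 1 else 0

private lemma sum_bdry (hN : 1 ≤ N) (f : Fin (N+1) → ℝ) :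
    ∑ i, bc N i * f i = f (Fin.last N) - f 0 := by
  have h0 : (0 : Fin (N+1)) ≠ Fin.last N := by
    simp [Fin.ext_iff, Fin.last]; omega
  have hN0 : ¬ (N = 0) := by omega
  have key : ∀ i : Fin (N+1), bc N i * f i
      = (if i = 0 then -f i else 0) + (if i = Fin.last N then f i else 0) := by
    intro i
    by_cases h1 : i = 0
    · subst h1; simp [bc, hN0]
    · by_cases h2 : i = Fin.last N <;> simp [bc, h1, h2, hN0]
  simp_rw [key, Finset.sum_add_distrib, Finset.sum_ite_eq', Finset.mem_univ, if_true]
  ring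

private lemma rowsum (ω : Fin (N+1) → ℝ) (D : Matrix (Fin (N+1)) (Fin (N+1)) ℝ)
    (hrows : ∀ i, (∑ m, D i m) = 0) (i : Fin (N+1)) :
    ∑ m, ω i * D i m = 0 := by
  rw [← Finset.mul_sum, hrows, mul_zero]

private lemma colsum (ω : Fin (N+1) → ℝ) (D : Matrix (Fin (N+1)) (Fin (N+1)) ℝ)
    (hrows : ∀ i, (∑ m, D i m) = 0)
    (hQ : ∀ i m, ω i * D i m + ω m * D m i
      = if i = m then bc N i else 0) (m : Fin (N+1)) :
    ∑ i, ω i * D i m = bc N m := by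
  have : ∀ i, ω i * D i m = (if i = m then bc N i else 0) - ω m * D m i := by
    intro i; rw [← hQ i m]; ring
  simp_rw [this, Finset.sum_sub_distrib, Finset.sum_ite_eq', Finset.mem_univ, if_true,
    rowsum ω D hrows m, sub_zero]

private lemma qsym (hN : 1 ≤ N) (ω : Fin (N+1) → ℝ) (D : Matrix (Fin (N+1)) (Fin (N+1)) ℝ)
    (hQ : ∀ i m, ω i * D i m + ω m * D m i = if i = m then bc N i else 0)
    (h : Fin (N+1) → Fin (N+1) → ℝ) (hh : ∀ i m, h i m = h m i) :
    ∑ i, ∑ m, (ω i * D i m) * h i m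
      = (h (Fin.last N) (Fin.last N) - h 0 0) / 2 := by
  have hswap : (∑ i, ∑ m, (ω i * D i m) * h i m)
      = ∑ i, ∑ m, (ω m * D m i) * h i m := by
    rw [Finset.sum_comm]
    exact Finset.sum_congr rfl fun i _ => Finset.sum_congr rfl fun m _ => by rw [hh]
  have h2 : 2 * (∑ i, ∑ m, (ω i * D i m) * h i m)
      = ∑ i, ∑ m, (if i = m then bc N i else 0) * h i m := by
    rw [two_mul]
    nth_rewrite 2 [hswap]
    rw [← Finset.sum_add_distrib]
    refine Finset.sum_congr rfl fun i _ => ?_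
    rw [← Finset.sum_add_distrib]
    refine Finset.sum_congr rfl fun m _ => ?_
    rw [← hQ i m]; ring
  have h3 : (∑ i, ∑ m, (if i = m then bc N i else 0) * h i m)
      = h (Fin.last N) (Fin.last N) - h 0 0 := by
    have : ∀ i : Fin (N+1), (∑ m, (if i = m then bc N i else 0) * h i m)
        = bc N i * h i i := by
      intro i
      simp_rw [ite_mul, zero_mul]
      rw [Finset.sum_ite_eq, if_pos (Finset.mem_univ i)]
    simp_rw [this]
    exact sum_bdry hN (fun i => h i i)
  linarith [h2, h3]

private lemma oneD {𝒮 : Type*} {n : ℕ}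
    (W : 𝒮 → Fin n → ℝ) (Φ : 𝒮 → ℝ) (b fS Ψ : 𝒮 → ℝ)
    (F : 𝒮 → 𝒮 → Fin n → ℝ)
    (hsym : ∀ U V, F U V = F V U)
    (hec : ∀ U V, (∑ a, (W U a - W V a) * F U V a)
      = Ψ U - Ψ V - (1/2) * (b U + b V) * (Φ U - Φ V))
    (hdiag : ∀ U, (∑ a, W U a * F U U a) = Ψ U + fS U - Φ U * b U)
    (hN : 1 ≤ N) (ω : Fin (N+1) → ℝ)
    (D : Matrix (Fin (N+1)) (Fin (N+1)) ℝ)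
    (hrows : ∀ i, (∑ m, D i m) = 0)
    (hQ : ∀ i m, ω i * D i m + ω m * D m i = if i = m then bc N i else 0)
    (u : Fin (N+1) → 𝒮) :
    (∑ i, ω i * ∑ a, W (u i) a * (2 * ∑ m, D i m * F (u i) (u m) a))
    + (∑ i, ω i * Φ (u i) * ∑ m, D i m * b (u m))
    = fS (u (Fin.last N)) - fS (u 0) := by
  set s : Fin (N+1) → Fin (N+1) → ℝ :=
    fun i m => ∑ a, (W (u i) a + W (u m) a) * F (u i) (u m) a with hs
  set hh : Fin (N+1) → Fin (N+1) → ℝ :=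
    fun i m => b (u i) * Φ (u m) + b (u m) * Φ (u i) with hhdef
  -- step 1: rewrite each part as a double sum over i, m
  have h1 : ∀ i, ω i * ∑ a, W (u i) a * (2 * ∑ m, D i m * F (u i) (u m) a)
      = ∑ m, (ω i * D i m) * (2 * ∑ a, W (u i) a * F (u i) (u m) a) := by
    intro i
    rw [Finset.mul_sum]
    have : ∀ a, ω i * (W (u i) a * (2 * ∑ m, D i m * F (u i) (u m) a))
        = ∑ m, (ω i * D i m) * (2 * (W (u i) a * F (u i) (u m) a)) := by
      intro a
      rw [Finset.mul_sum, Finset.mul_sum, Finset.mul_sum]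
      exact Finset.sum_congr rfl fun m _ => by ring
    simp_rw [this]
    rw [Finset.sum_comm]
    refine Finset.sum_congr rfl fun m _ => ?_
    rw [Finset.mul_sum, Finset.mul_sum]
  have h1' : ∀ i, ω i * Φ (u i) * ∑ m, D i m * b (u m)
      = ∑ m, (ω i * D i m) * (Φ (u i) * b (u m)) := by
    intro i
    rw [Finset.mul_sum]
    exact Finset.sum_congr rfl fun m _ => by ring
  -- step 2: two-point decomposition
  have h2 : ∀ i m, 2 * ∑ a, W (u i) a * F (u i) (u m) a
      = s i m + (Ψ (u i) - Ψ (u m)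
          - (1/2) * (b (u i) + b (u m)) * (Φ (u i) - Φ (u m))) := by
    intro i m
    rw [← hec (u i) (u m), hs]
    rw [Finset.mul_sum, ← Finset.sum_add_distrib]
    exact Finset.sum_congr rfl fun a _ => by ring
  -- the summand decomposition
  have h3 : ∀ i m, (ω i * D i m) * (2 * ∑ a, W (u i) a * F (u i) (u m) a)
        + (ω i * D i m) * (Φ (u i) * b (u m))
      = (ω i * D i m) * s i m
        + (ω i * D i m) * (Ψ (u i) - (1/2) * (b (u i) * Φ (u i)))
        + (ω i * D i m) * (-(Ψ (u m)) + (1/2) * (b (u m) * Φ (u m)))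
        + (ω i * D i m) * ((1/2) * hh i m) := by
    intro i m
    rw [h2 i m, hhdef]
    ring
  -- assemble LHS as sum of four double sums
  have hLHS : (∑ i, ω i * ∑ a, W (u i) a * (2 * ∑ m, D i m * F (u i) (u m) a))
      + (∑ i, ω i * Φ (u i) * ∑ m, D i m * b (u m))
      = (∑ i, ∑ m, (ω i * D i m) * s i m)
        + (∑ i, ∑ m, (ω i * D i m) * (Ψ (u i) - (1/2) * (b (u i) * Φ (u i))))
        + (∑ i, ∑ m, (ω i * D i m) * (-(Ψ (u m)) + (1/2) * (b (u m) * Φ (u m))))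
        + (∑ i, ∑ m, (ω i * D i m) * ((1/2) * hh i m)) := by
    simp_rw [h1, h1', ← Finset.sum_add_distrib, h3]
  rw [hLHS]
  -- evaluate the four pieces
  have hssym : ∀ i m, s i m = s m i := by
    intro i m
    rw [hs]
    simp only
    rw [hsym (u i) (u m)]
    exact Finset.sum_congr rfl fun a _ => by ring
  have hhsym : ∀ i m, hh i m = hh m i := by intro i m; rw [hhdef]; ring
  have P1 : (∑ i, ∑ m, (ω i * D i m) * s i m)
      = ((Ψ (u (Fin.last N)) + fS (u (Fin.last N)) - Φ (u (Fin.last N)) * b (u (Fin.last N)))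
        - (Ψ (u 0) + fS (u 0) - Φ (u 0) * b (u 0))) := by
    rw [qsym hN ω D hQ s hssym]
    have hsd : ∀ i, s i i = 2 * (Ψ (u i) + fS (u i) - Φ (u i) * b (u i)) := by
      intro i
      rw [← hdiag (u i), hs]
      simp only
      rw [Finset.mul_sum]
      exact Finset.sum_congr rfl fun a _ => by ring
    rw [hsd, hsd]; ring
  have P2 : (∑ i, ∑ m, (ω i * D i m) * (Ψ (u i) - (1/2) * (b (u i) * Φ (u i)))) = 0 := by
    refine Finset.sum_eq_zero fun i _ => ?_
    rw [← Finset.sum_mul, rowsum ω D hrows i, zero_mul]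
  have P3 : (∑ i, ∑ m, (ω i * D i m) * (-(Ψ (u m)) + (1/2) * (b (u m) * Φ (u m))))
      = (-(Ψ (u (Fin.last N))) + (1/2) * (b (u (Fin.last N)) * Φ (u (Fin.last N))))
        - (-(Ψ (u 0)) + (1/2) * (b (u 0) * Φ (u 0))) := by
    rw [Finset.sum_comm]
    have : ∀ m : Fin (N+1), (∑ i, (ω i * D i m) * (-(Ψ (u m)) + (1/2) * (b (u m) * Φ (u m))))
        = bc N m * (-(Ψ (u m)) + (1/2) * (b (u m) * Φ (u m))) := by
      intro m
      rw [← Finset.sum_mul, colsum ω D hrows hQ m]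
    simp_rw [this]
    exact sum_bdry hN _
  have P4 : (∑ i, ∑ m, (ω i * D i m) * ((1/2) * hh i m))
      = (1/2) * ((hh (Fin.last N) (Fin.last N) - hh 0 0) / 2) := by
    have : ∀ i m, (ω i * D i m) * ((1/2) * hh i m) = (1/2) * ((ω i * D i m) * hh i m) := by
      intro i m; ring
    simp_rw [this, ← Finset.mul_sum]
    rw [qsym hN ω D hQ hh hhsym]
  rw [P1, P2, P3, P4, hhdef]
  ring

end helpers

/-- **Entropy contribution of total volume terms** (Corollary 4.3, abstract
two-dimensional form).  The contracted advective plus nonconservative volume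
contributions reduce exactly to the boundary quadrature of the entropy flux. -/
theorem total_volume_terms_boundary
    {𝒮 : Type*} (n : ℕ) (hn : 1 ≤ n)
    (W : 𝒮 → Fin n → ℝ) (Φ : 𝒮 → ℝ)
    (b fS Ψ : Fin 2 → 𝒮 → ℝ)
    (F : Fin 2 → 𝒮 → 𝒮 → Fin n → ℝ)
    (hsym : ∀ (d : Fin 2) (U V : 𝒮), F d U V = F d V U)
    (hec : ∀ (d : Fin 2) (U V : 𝒮),
      (∑ a, (W U a - W V a) * F d U V a)
        = Ψ d U - Ψ d V - (1/2) * (b d U + b d V) * (Φ U - Φ V))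
    (hdiag : ∀ (d : Fin 2) (U : 𝒮),
      (∑ a, W U a * F d U U a) = Ψ d U + fS d U - Φ U * b d U)
    (N : ℕ) (hN : 1 ≤ N)
    (ω : Fin (N+1) → ℝ) (hω : ∀ i, 0 < ω i)
    (D : Matrix (Fin (N+1)) (Fin (N+1)) ℝ)
    (hrows : ∀ i, (∑ m, D i m) = 0)
    (hSBP : Matrix.diagonal ω * D + (Matrix.diagonal ω * D)ᵀ
      = Matrix.diagonal (fun i => if i = 0 then (-1 : ℝ)
          else if i = Fin.last N then 1 else 0))
    (U : Fin (N+1) → Fin (N+1) → 𝒮) :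
    (∑ i, ∑ j, ω i * ω j * ∑ a, W (U i j) a *
      (2 * ∑ m, D i m * F 0 (U i j) (U m j) a
        + 2 * ∑ m, D j m * F 1 (U i j) (U i m) a))
    + (∑ i, ∑ j, ω i * ω j * Φ (U i j) *
        ((∑ m, D i m * b 0 (U m j)) + ∑ m, D j m * b 1 (U i m)))
    = (∑ j, ω j * (fS 0 (U (Fin.last N) j) - fS 0 (U 0 j)))
      + ∑ i, ω i * (fS 1 (U i (Fin.last N)) - fS 1 (U i 0)) := by
  have hQ : ∀ i m, ω i * D i m + ω m * D m i = if i = m then bc N i else 0 := by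
    intro i m
    have h := hSBP
    rw [← Matrix.ext_iff] at h
    have h2 := h i m
    simpa [Matrix.add_apply, Matrix.transpose_apply, Matrix.mul_apply,
      Matrix.diagonal_apply, ite_mul, zero_mul, Finset.sum_ite_eq,
      bc, mul_comm] using h2
  have hA : ∀ i j, ω i * ω j * ∑ a, W (U i j) a *
      (2 * ∑ m, D i m * F 0 (U i j) (U m j) a + 2 * ∑ m, D j m * F 1 (U i j) (U i m) a)
    = ω j * (ω i * ∑ a, W (U i j) a * (2 * ∑ m, D i m * F 0 (U i j) (U m j) a))
      + ω i * (ω j * ∑ a, W (U i j) a * (2 * ∑ m, D j m * F 1 (U i j) (U i m) a)) := by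
    intro i j
    simp_rw [mul_add, Finset.sum_add_distrib]
    ring
  have hB : ∀ i j, ω i * ω j * Φ (U i j) *
      ((∑ m, D i m * b 0 (U m j)) + ∑ m, D j m * b 1 (U i m))
    = ω j * (ω i * Φ (U i j) * ∑ m, D i m * b 0 (U m j))
      + ω i * (ω j * Φ (U i j) * ∑ m, D j m * b 1 (U i m)) := by
    intro i j; ring
  simp_rw [hA, hB, Finset.sum_add_distrib]
  have comm1 : (∑ i, ∑ j, ω j * (ω i * ∑ a, W (U i j) a *
        (2 * ∑ m, D i m * F 0 (U i j) (U m j) a)))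
      = ∑ j, ∑ i, ω j * (ω i * ∑ a, W (U i j) a *
        (2 * ∑ m, D i m * F 0 (U i j) (U m j) a)) := Finset.sum_comm
  have comm2 : (∑ i, ∑ j, ω j * (ω i * Φ (U i j) * ∑ m, D i m * b 0 (U m j)))
      = ∑ j, ∑ i, ω j * (ω i * Φ (U i j) * ∑ m, D i m * b 0 (U m j)) :=
    Finset.sum_comm
  rw [comm1, comm2]
  have d1 : (∑ j, ∑ i, ω j * (ω i * ∑ a, W (U i j) a *
        (2 * ∑ m, D i m * F 0 (U i j) (U m j) a)))
      + (∑ j, ∑ i, ω j * (ω i * Φ (U i j) * ∑ m, D i m * b 0 (U m j)))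
      = ∑ j, ω j * (fS 0 (U (Fin.last N) j) - fS 0 (U 0 j)) := by
    rw [← Finset.sum_add_distrib]
    refine Finset.sum_congr rfl fun j _ => ?_
    rw [← Finset.mul_sum, ← Finset.mul_sum, ← mul_add]
    congr 1
    exact oneD W Φ (b 0) (fS 0) (Ψ 0) (F 0) (hsym 0) (hec 0) (hdiag 0)
      hN ω D hrows hQ (fun i => U i j)
  have d2 : (∑ i, ∑ j, ω i * (ω j * ∑ a, W (U i j) a *
        (2 * ∑ m, D j m * F 1 (U i j) (U i m) a)))
      + (∑ i, ∑ j, ω i * (ω j * Φ (U i j) * ∑ m, D j m * b 1 (U i m)))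
      = ∑ i, ω i * (fS 1 (U i (Fin.last N)) - fS 1 (U i 0)) := by
    rw [← Finset.sum_add_distrib]
    refine Finset.sum_congr rfl fun i _ => ?_
    rw [← Finset.mul_sum, ← Finset.mul_sum, ← mul_add]
    congr 1
    exact oneD W Φ (b 1) (fS 1) (Ψ 1) (F 1) (hsym 1) (hec 1) (hdiag 1)
      hN ω D hrows hQ (fun m => U i m)
  linarith [d1, d2]
end

section
/- (Cancellation of ideal-MHD and nonconservative volume terms, equation (4.17) / Appendix B, abstract two-dimensional form.) Let 𝒮 be a set of states, n ≥ 1, W : 𝒮 → ℝⁿ, and Φ, b₁, b₂, Ψ₁, Ψ₂ : 𝒮 → ℝ. For d = 1, 2 let F_d : 𝒮 × 𝒮 → ℝⁿ be symmetric two-point fluxes satisfying, for all U, V ∈ 𝒮: (W(U) − W(V))ᵀ F_d(U, V) = Ψ_d(U) − Ψ_d(V) − ½(b_d(U) + b_d(V))(Φ(U) − Φ(V)), and the diagonal contraction property W(U)ᵀ F_d(U, U) = Ψ_d(U) − Φ(U) b_d(U). Then for any SBP operator (ω, D, Q) and any nodal states U_{ij} ∈ 𝒮 (0 ≤ i, j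 ≤ N): Σ_{i,j} ω_i ω_j W(U_{ij})ᵀ [ 2 Σ_m D_{im} F₁(U_{ij}, U_{mj}) + 2 Σ_m D_{jm} F₂(U_{ij}, U_{im}) ] + Σ_{i,j} ω_i ω_j Φ(U_{ij}) [ Σ_m D_{im} b₁(U_{mj}) + Σ_m D_{jm} b₂(U_{im}) ] = 0. -/
open Matrix

/-- Abstract scalar cancellation lemma. -/
lemma sbp_key {ι : Type*} [Fintype ι] [DecidableEq ι]
    (Q : ι → ι → ℝ) (B ψ φ bb : ι → ℝ) (C : ι → ι → ℝ)
    (hrow : ∀ i, (∑ m, Q i m) = 0)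
    (hQ : ∀ i m, Q i m + Q m i = if i = m then B i else 0)
    (hC : ∀ i m, C i m - C m i = ψ i - ψ m - (1/2) * (bb i + bb m) * (φ i - φ m))
    (hCd : ∀ i, C i i = ψ i - φ i * bb i) :
    2 * (∑ i, ∑ m, Q i m * C i m) + (∑ i, ∑ m, Q i m * (φ i * bb m)) = 0 := by
  have hcol : ∀ m, (∑ i, Q i m) = B m := by
    intro m
    have h1 : (∑ i, (Q i m + Q m i)) = B m := by
      simp only [hQ]
      simp
    rw [Finset.sum_add_distrib, hrow m, add_zero] at h1
    exact h1
  have hpoint : ∀ i m : ι,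
      2*(Q i m * C i m) + Q i m * (φ i * bb m)
        + (2*(Q m i * C m i) + Q m i * (φ m * bb i))
      = Q i m * (2*ψ i - bb i * φ i) - Q i m * (2*ψ m - bb m * φ m)
        + (if i = m then B i else 0) * (2*C m i + φ m * bb i) := by
    intro i m
    have hq := hQ i m
    have hc := hC i m
    linear_combination (2*C m i + φ m * bb i) * hq + 2 * Q i m * hc
  have hE2 : (∑ i, ∑ m, (2*(Q i m * C i m) + Q i m * (φ i * bb m)
      + (2*(Q m i * C m i) + Q m i * (φ m * bb i)))) = 0 := by
    calc (∑ i, ∑ m, (2*(Q i m * C i m) + Q i m * (φ i * bb m)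
        + (2*(Q m i * C m i) + Q m i * (φ m * bb i))))
        = ∑ i, ∑ m, (Q i m * (2*ψ i - bb i * φ i) - Q i m * (2*ψ m - bb m * φ m)
            + (if i = m then B i else 0) * (2*C m i + φ m * bb i)) :=
          Finset.sum_congr rfl fun i _ => Finset.sum_congr rfl fun m _ => hpoint i m
      _ = (∑ i, ∑ m, Q i m * (2*ψ i - bb i * φ i))
            - (∑ i, ∑ m, Q i m * (2*ψ m - bb m * φ m))
            + ∑ i, ∑ m, (if i = m then B i else 0) * (2*C m i + φ m * bb i) := by
          simp [Finset.sum_add_distrib, Finset.sum_sub_distrib]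
      _ = 0 := by
          have s1 : (∑ i, ∑ m, Q i m * (2*ψ i - bb i * φ i)) = 0 := by
            apply Finset.sum_eq_zero; intro i _
            rw [← Finset.sum_mul, hrow i, zero_mul]
          have s2 : (∑ i, ∑ m, Q i m * (2*ψ m - bb m * φ m))
              = ∑ m, B m * (2*ψ m - bb m * φ m) := by
            rw [Finset.sum_comm]
            exact Finset.sum_congr rfl fun m _ => by rw [← Finset.sum_mul, hcol m]
          have s3 : (∑ i, ∑ m, (if i = m then B i else 0) * (2*C m i + φ m * bb i))
              = ∑ i, B i * (2*ψ i - bb i * φ i) := by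
            apply Finset.sum_congr rfl; intro i _
            rw [Finset.sum_eq_single i]
            · rw [if_pos rfl, hCd i]; ring
            · intro m _ hm; rw [if_neg (Ne.symm hm), zero_mul]
            · intro h; exact absurd (Finset.mem_univ i) h
          rw [s1, s2, s3]; ring
  have hE : (∑ i, ∑ m, (2*(Q i m * C i m) + Q i m * (φ i * bb m)
      + (2*(Q m i * C m i) + Q m i * (φ m * bb i))))
      = 2*(2 * (∑ i, ∑ m, Q i m * C i m) + (∑ i, ∑ m, Q i m * (φ i * bb m))) := by
    have e1 : (∑ i, ∑ m, 2*(Q m i * C m i)) = ∑ i, ∑ m, 2*(Q i m * C i m) :=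
      Finset.sum_comm
    have e2 : (∑ i, ∑ m, Q m i * (φ m * bb i)) = ∑ i, ∑ m, Q i m * (φ i * bb m) :=
      Finset.sum_comm
    have e3 : (∑ i, ∑ m, 2*(Q i m * C i m)) = 2 * ∑ i, ∑ m, Q i m * C i m := by
      simp [Finset.mul_sum]
    simp only [Finset.sum_add_distrib]
    rw [e1, e2, e3]; ring
  linarith [hE, hE2]

/-- One-dimensional (per-line) cancellation. -/
lemma sbp_oneD {𝒮 : Type*} {n : ℕ}
    (W : 𝒮 → Fin n → ℝ) (Φ : 𝒮 → ℝ) (b Ψ : 𝒮 → ℝ)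
    (F : 𝒮 → 𝒮 → Fin n → ℝ)
    (hsym : ∀ U V, F U V = F V U)
    (hec : ∀ U V, (∑ a, (W U a - W V a) * F U V a)
        = Ψ U - Ψ V - (1/2) * (b U + b V) * (Φ U - Φ V))
    (hdiag : ∀ U, (∑ a, W U a * F U U a) = Ψ U - Φ U * b U)
    {N : ℕ} (ω : Fin (N+1) → ℝ)
    (D : Matrix (Fin (N+1)) (Fin (N+1)) ℝ)
    (hrows : ∀ i, (∑ m, D i m) = 0)
    (B : Fin (N+1) → ℝ)
    (hQ : ∀ i m, ω i * D i m + ω m * D m i = if i = m then B i else 0)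
    (u : Fin (N+1) → 𝒮) :
    ∑ i, ω i * ((∑ a, W (u i) a * (2 * ∑ m, D i m * F (u i) (u m) a))
      + Φ (u i) * ∑ m, D i m * b (u m)) = 0 := by
  set Q : Fin (N+1) → Fin (N+1) → ℝ := fun i m => ω i * D i m with hQdef
  set C : Fin (N+1) → Fin (N+1) → ℝ :=
    fun i m => ∑ a, W (u i) a * F (u i) (u m) a with hCdef
  have hrow' : ∀ i, (∑ m, Q i m) = 0 := by
    intro i; simp only [hQdef, ← Finset.mul_sum, hrows i, mul_zero]
  have hC : ∀ i m, C i m - C m i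
      = Ψ (u i) - Ψ (u m) - (1/2) * (b (u i) + b (u m)) * (Φ (u i) - Φ (u m)) := by
    intro i m
    have h1 : C m i = ∑ a, W (u m) a * F (u i) (u m) a := by
      simp only [hCdef, hsym (u m) (u i)]
    rw [h1, hCdef]
    rw [← Finset.sum_sub_distrib]
    rw [show (∑ a, (W (u i) a * F (u i) (u m) a - W (u m) a * F (u i) (u m) a))
        = ∑ a, (W (u i) a - W (u m) a) * F (u i) (u m) a from
      Finset.sum_congr rfl fun a _ => by ring]
    exact hec (u i) (u m)
  have hCd : ∀ i, C i i = Ψ (u i) - Φ (u i) * b (u i) := fun i => hdiag (u i)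
  have hkey := sbp_key Q B (fun i => Ψ (u i)) (fun i => Φ (u i)) (fun i => b (u i)) C
    hrow' hQ hC hCd
  have h1 : ∀ i, ω i * (∑ a, W (u i) a * (2 * ∑ m, D i m * F (u i) (u m) a))
      = ∑ m, 2 * (Q i m * C i m) := by
    intro i
    calc ω i * (∑ a, W (u i) a * (2 * ∑ m, D i m * F (u i) (u m) a))
        = ∑ a, ∑ m, 2 * (Q i m * (W (u i) a * F (u i) (u m) a)) := by
          rw [Finset.mul_sum]
          refine Finset.sum_congr rfl fun a _ => ?_
          rw [show ω i * (W (u i) a * (2 * ∑ m, D i m * F (u i) (u m) a))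
              = (2 * ω i * W (u i) a) * ∑ m, D i m * F (u i) (u m) a from by ring,
            Finset.mul_sum]
          exact Finset.sum_congr rfl fun m _ => by simp only [hQdef]; ring
      _ = ∑ m, ∑ a, 2 * (Q i m * (W (u i) a * F (u i) (u m) a)) := Finset.sum_comm
      _ = ∑ m, 2 * (Q i m * C i m) := by
          refine Finset.sum_congr rfl fun m _ => ?_
          rw [show (2:ℝ) * (Q i m * C i m) = (2 * Q i m) * C i m from by ring, hCdef,
            Finset.mul_sum]
          exact Finset.sum_congr rfl fun a _ => by ring
  have h2 : ∀ i, ω i * (Φ (u i) * ∑ m, D i m * b (u m))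
      = ∑ m, Q i m * (Φ (u i) * b (u m)) := by
    intro i
    rw [show ω i * (Φ (u i) * ∑ m, D i m * b (u m))
        = (ω i * Φ (u i)) * ∑ m, D i m * b (u m) from by ring, Finset.mul_sum]
    exact Finset.sum_congr rfl fun m _ => by simp only [hQdef]; ring
  calc ∑ i, ω i * ((∑ a, W (u i) a * (2 * ∑ m, D i m * F (u i) (u m) a))
        + Φ (u i) * ∑ m, D i m * b (u m))
      = ∑ i, ((∑ m, 2 * (Q i m * C i m)) + ∑ m, Q i m * (Φ (u i) * b (u m))) := by
        refine Finset.sum_congr rfl fun i _ => ?_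
        rw [mul_add, h1 i, h2 i]
    _ = (∑ i, ∑ m, 2 * (Q i m * C i m)) + ∑ i, ∑ m, Q i m * (Φ (u i) * b (u m)) :=
        Finset.sum_add_distrib
    _ = 2 * (∑ i, ∑ m, Q i m * C i m) + ∑ i, ∑ m, Q i m * (Φ (u i) * b (u m)) := by
        rw [show (∑ i, ∑ m, 2 * (Q i m * C i m)) = 2 * ∑ i, ∑ m, Q i m * C i m from by
          simp [Finset.mul_sum]]
    _ = 0 := hkey


/-- **Cancellation of ideal-MHD and nonconservative volume terms**
(equation (4.17) / Appendix B, abstract two-dimensional form).  In entropy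
space the ideal-MHD volume flux contributions cancel exactly against the
nonconservative volume terms. -/
theorem mhd_nonconservative_volume_cancel
    {𝒮 : Type*} (n : ℕ) (hn : 1 ≤ n)
    (W : 𝒮 → Fin n → ℝ) (Φ : 𝒮 → ℝ)
    (b Ψ : Fin 2 → 𝒮 → ℝ)
    (F : Fin 2 → 𝒮 → 𝒮 → Fin n → ℝ)
    (hsym : ∀ (d : Fin 2) (U V : 𝒮), F d U V = F d V U)
    (hec : ∀ (d : Fin 2) (U V : 𝒮),
      (∑ a, (W U a - W V a) * F d U V a)
        = Ψ d U - Ψ d V - (1/2) * (b d U + b d V) * (Φ U - Φ V))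
    (hdiag : ∀ (d : Fin 2) (U : 𝒮),
      (∑ a, W U a * F d U U a) = Ψ d U - Φ U * b d U)
    (N : ℕ) (hN : 1 ≤ N)
    (ω : Fin (N+1) → ℝ) (hω : ∀ i, 0 < ω i)
    (D : Matrix (Fin (N+1)) (Fin (N+1)) ℝ)
    (hrows : ∀ i, (∑ m, D i m) = 0)
    (hSBP : Matrix.diagonal ω * D + (Matrix.diagonal ω * D)ᵀ
      = Matrix.diagonal (fun i => if i = 0 then (-1 : ℝ)
          else if i = Fin.last N then 1 else 0))
    (U : Fin (N+1) → Fin (N+1) → 𝒮) :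
    (∑ i, ∑ j, ω i * ω j * ∑ a, W (U i j) a *
      (2 * ∑ m, D i m * F 0 (U i j) (U m j) a
        + 2 * ∑ m, D j m * F 1 (U i j) (U i m) a))
    + (∑ i, ∑ j, ω i * ω j * Φ (U i j) *
        ((∑ m, D i m * b 0 (U m j)) + ∑ m, D j m * b 1 (U i m)))
    = 0 := by
  set B : Fin (N+1) → ℝ := fun i => if i = 0 then (-1 : ℝ)
      else if i = Fin.last N then 1 else 0 with hB
  have hQ : ∀ i m, ω i * D i m + ω m * D m i = if i = m then B i else 0 := by
    intro i m
    have h := congrFun (congrFun hSBP i) m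
    simpa [Matrix.add_apply, Matrix.transpose_apply, Matrix.diagonal_mul,
      Matrix.diagonal_apply, hB, mul_comm] using h
  have key1 : ∀ j, ∑ i, ω i * ((∑ a, W (U i j) a *
      (2 * ∑ m, D i m * F 0 (U i j) (U m j) a))
      + Φ (U i j) * ∑ m, D i m * b 0 (U m j)) = 0 := fun j =>
    sbp_oneD W Φ (b 0) (Ψ 0) (F 0) (hsym 0) (hec 0) (hdiag 0) ω D hrows B hQ
      (fun i => U i j)
  have key2 : ∀ i, ∑ j, ω j * ((∑ a, W (U i j) a *
      (2 * ∑ m, D j m * F 1 (U i j) (U i m) a))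
      + Φ (U i j) * ∑ m, D j m * b 1 (U i m)) = 0 := fun i =>
    sbp_oneD W Φ (b 1) (Ψ 1) (F 1) (hsym 1) (hec 1) (hdiag 1) ω D hrows B hQ
      (fun m => U i m)
  have main : (∑ i, ∑ j,
      (ω j * (ω i * ((∑ a, W (U i j) a * (2 * ∑ m, D i m * F 0 (U i j) (U m j) a))
          + Φ (U i j) * ∑ m, D i m * b 0 (U m j)))
      + ω i * (ω j * ((∑ a, W (U i j) a * (2 * ∑ m, D j m * F 1 (U i j) (U i m) a))
          + Φ (U i j) * ∑ m, D j m * b 1 (U i m))))) = 0 := by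
    rw [show (∑ i, ∑ j,
      (ω j * (ω i * ((∑ a, W (U i j) a * (2 * ∑ m, D i m * F 0 (U i j) (U m j) a))
          + Φ (U i j) * ∑ m, D i m * b 0 (U m j)))
      + ω i * (ω j * ((∑ a, W (U i j) a * (2 * ∑ m, D j m * F 1 (U i j) (U i m) a))
          + Φ (U i j) * ∑ m, D j m * b 1 (U i m)))))
      = (∑ i, ∑ j,
        ω j * (ω i * ((∑ a, W (U i j) a * (2 * ∑ m, D i m * F 0 (U i j) (U m j) a))
          + Φ (U i j) * ∑ m, D i m * b 0 (U m j))))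
      + (∑ i, ∑ j,
        ω i * (ω j * ((∑ a, W (U i j) a * (2 * ∑ m, D j m * F 1 (U i j) (U i m) a))
          + Φ (U i j) * ∑ m, D j m * b 1 (U i m)))) from by
      simp [Finset.sum_add_distrib]]
    have p1 : (∑ i, ∑ j,
        ω j * (ω i * ((∑ a, W (U i j) a * (2 * ∑ m, D i m * F 0 (U i j) (U m j) a))
          + Φ (U i j) * ∑ m, D i m * b 0 (U m j)))) = 0 := by
      rw [Finset.sum_comm]
      apply Finset.sum_eq_zero; intro j _
      rw [← Finset.mul_sum, key1 j, mul_zero]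
    have p2 : (∑ i, ∑ j,
        ω i * (ω j * ((∑ a, W (U i j) a * (2 * ∑ m, D j m * F 1 (U i j) (U i m) a))
          + Φ (U i j) * ∑ m, D j m * b 1 (U i m)))) = 0 := by
      apply Finset.sum_eq_zero; intro i _
      rw [← Finset.mul_sum, key2 i, mul_zero]
    rw [p1, p2, add_zero]
  calc (∑ i, ∑ j, ω i * ω j * ∑ a, W (U i j) a *
      (2 * ∑ m, D i m * F 0 (U i j) (U m j) a
        + 2 * ∑ m, D j m * F 1 (U i j) (U i m) a))
    + (∑ i, ∑ j, ω i * ω j * Φ (U i j) *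
        ((∑ m, D i m * b 0 (U m j)) + ∑ m, D j m * b 1 (U i m)))
      = ∑ i, ∑ j,
      (ω j * (ω i * ((∑ a, W (U i j) a * (2 * ∑ m, D i m * F 0 (U i j) (U m j) a))
          + Φ (U i j) * ∑ m, D i m * b 0 (U m j)))
      + ω i * (ω j * ((∑ a, W (U i j) a * (2 * ∑ m, D j m * F 1 (U i j) (U i m) a))
          + Φ (U i j) * ∑ m, D j m * b 1 (U i m)))) := by
        rw [← Finset.sum_add_distrib]
        refine Finset.sum_congr rfl fun i _ => ?_
        rw [← Finset.sum_add_distrib]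
        refine Finset.sum_congr rfl fun j _ => ?_
        have hsplit : (∑ a, W (U i j) a *
            (2 * ∑ m, D i m * F 0 (U i j) (U m j) a
              + 2 * ∑ m, D j m * F 1 (U i j) (U i m) a))
            = (∑ a, W (U i j) a * (2 * ∑ m, D i m * F 0 (U i j) (U m j) a))
              + ∑ a, W (U i j) a * (2 * ∑ m, D j m * F 1 (U i j) (U i m) a) := by
          rw [← Finset.sum_add_distrib]
          exact Finset.sum_congr rfl fun a _ => by ring
        rw [hsplit]; ring
    _ = 0 := main
end
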